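/- Let n ≥ 6, let σ be a 3-form on ℝⁿ, and let F : ℝⁿ → ℝⁿ be a continuous map such that F(tX) = tF(X) for all t ∈ ℝ and X ∈ ℝⁿ, ⟨F(X), X⟩ = 0 and ‖F(X)‖ = ‖X‖ for all X, and σ_X² = −‖X‖² id + X⊗X + F(X)⊗F(X) for all X ∈ ℝⁿ. Then F(X+Y) lies in the linear span of F(X) and F(Y) for all X, Y ∈ ℝⁿ. -/

import Mathlib

open scoped RealInnerProductSpace

noncomputable section

/-- Euclidean space `ℝⁿ`. -/
abbrev Euc (n : ℕ) : Type := EuclideanSpace ℝ (Fin n)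

/-- The skew-symmetric endomorphism `τ_X` of `ℝⁿ` associated to a 3-form `τ` and a vector `X`,
characterized by `⟪τ_X Y, Z⟫ = τ (X, Y, Z)`. -/
noncomputable def contr3 {n : ℕ} (τ : AlternatingMap ℝ (Euc n) ℝ (Fin 3)) (X : Euc n) :
    Euc n →ₗ[ℝ] Euc n where
  toFun Y := ∑ i : Fin n,
    ((τ.curryLeft X).curryLeft Y ![EuclideanSpace.single i 1]) • EuclideanSpace.single i (1 : ℝ)
  map_add' Y₁ Y₂ := by
    simp [map_add, add_smul, Finset.sum_add_distrib]
  map_smul' c Y := by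
    simp [map_smul, smul_smul, Finset.smul_sum]

/-- `τ` is a vector cross product: `‖τ_X Y‖² = ‖X‖²‖Y‖² − ⟪X,Y⟫²`. -/
def IsVCP {n : ℕ} (τ : AlternatingMap ℝ (Euc n) ℝ (Fin 3)) : Prop :=
  ∀ X Y : Euc n, ‖contr3 τ X Y‖ ^ 2 = ‖X‖ ^ 2 * ‖Y‖ ^ 2 - ⟪X, Y⟫ ^ 2

/-- `σ` is a generalized vector cross product: there is a nonzero skew-symmetric endomorphism `A`
such that for every unit vector `X`, `σ_X` is orthogonally conjugate to `A`. -/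
def IsGVCP {n : ℕ} (σ : AlternatingMap ℝ (Euc n) ℝ (Fin 3)) : Prop :=
  ∃ A : Euc n →ₗ[ℝ] Euc n, A ≠ 0 ∧ (∀ X Y : Euc n, ⟪A X, Y⟫ = -⟪X, A Y⟫) ∧
    ∀ X : Euc n, ‖X‖ = 1 → ∃ u : Euc n ≃ₗᵢ[ℝ] Euc n,
      ∀ Y : Euc n, contr3 σ X Y = u (A (u.symm Y))

/-- The endomorphism `U ⊗ V : X ↦ ⟪X, V⟫ U`. -/
noncomputable def tens {n : ℕ} (U V : Euc n) : Euc n →ₗ[ℝ] Euc n where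
  toFun X := ⟪X, V⟫ • U
  map_add' X₁ X₂ := by simp only [inner_add_left, add_smul]
  map_smul' c X := by simp only [RingHom.id_apply]; rw [real_inner_smul_left, mul_smul]

/-- The `i`-th coordinate, as a linear functional on `ℝⁿ`. -/
noncomputable def coordL {n : ℕ} (i : Fin n) : Euc n →ₗ[ℝ] ℝ where
  toFun x := x i
  map_add' _ _ := rfl
  map_smul' _ _ := rfl

/-- The elementary 3-form `eᵢ ∧ eⱼ ∧ e_k` on `ℝⁿ`. -/
noncomputable def elem3 {n : ℕ} (i j k : Fin n) : AlternatingMap ℝ (Euc n) ℝ (Fin 3) :=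
  (Matrix.detRowAlternating : AlternatingMap ℝ (Fin 3 → ℝ) ℝ (Fin 3)).compLinearMap
    (LinearMap.pi (fun s : Fin 3 => coordL (![i, j, k] s)))

/-- The action of an orthogonal transformation `α` on 3-forms:
`(α · τ)(X,Y,Z) = τ(α⁻¹X, α⁻¹Y, α⁻¹Z)`. -/
noncomputable def oAct {n : ℕ} (α : Euc n ≃ₗᵢ[ℝ] Euc n)
    (τ : AlternatingMap ℝ (Euc n) ℝ (Fin 3)) : AlternatingMap ℝ (Euc n) ℝ (Fin 3) :=
  τ.compLinearMap α.symm.toLinearEquiv.toLinearMap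

/-- The volume form `e₁ ∧ e₂ ∧ e₃` (in any `ℝⁿ` with `n ≥ 3`). -/
noncomputable def vol3Gen {n : ℕ} (h : 3 ≤ n) : AlternatingMap ℝ (Euc n) ℝ (Fin 3) :=
  elem3 ⟨0, by omega⟩ ⟨1, by omega⟩ ⟨2, by omega⟩

/-- The fundamental `G₂` 3-form
`τ₀ = e₁∧e₂∧e₇ + e₃∧e₄∧e₇ + e₅∧e₆∧e₇ + e₁∧e₃∧e₅ − e₁∧e₄∧e₆ − e₂∧e₃∧e₆ − e₂∧e₄∧e₅`
(with 1-indexed basis vectors, stated in any `ℝⁿ` with `n ≥ 7`). -/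
noncomputable def tau0Gen {n : ℕ} (h : 7 ≤ n) : AlternatingMap ℝ (Euc n) ℝ (Fin 3) :=
  elem3 ⟨0, by omega⟩ ⟨1, by omega⟩ ⟨6, by omega⟩
  + elem3 ⟨2, by omega⟩ ⟨3, by omega⟩ ⟨6, by omega⟩
  + elem3 ⟨4, by omega⟩ ⟨5, by omega⟩ ⟨6, by omega⟩
  + elem3 ⟨0, by omega⟩ ⟨2, by omega⟩ ⟨4, by omega⟩
  - elem3 ⟨0, by omega⟩ ⟨3, by omega⟩ ⟨5, by omega⟩
  - elem3 ⟨1, by omega⟩ ⟨2, by omega⟩ ⟨5, by omega⟩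
  - elem3 ⟨1, by omega⟩ ⟨3, by omega⟩ ⟨4, by omega⟩

/-- The `SU(3)` 3-form `σ₀ = e₁∧e₃∧e₅ − e₁∧e₄∧e₆ − e₂∧e₃∧e₆ − e₂∧e₄∧e₅`
(with 1-indexed basis vectors, stated in any `ℝⁿ` with `n ≥ 6`). -/
noncomputable def sigma0Gen {n : ℕ} (h : 6 ≤ n) : AlternatingMap ℝ (Euc n) ℝ (Fin 3) :=
  elem3 ⟨0, by omega⟩ ⟨2, by omega⟩ ⟨4, by omega⟩
  - elem3 ⟨0, by omega⟩ ⟨3, by omega⟩ ⟨5, by omega⟩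
  - elem3 ⟨1, by omega⟩ ⟨2, by omega⟩ ⟨5, by omega⟩
  - elem3 ⟨1, by omega⟩ ⟨3, by omega⟩ ⟨4, by omega⟩

end

noncomputable def lastArg {n : ℕ} (τ : AlternatingMap ℝ (Euc n) ℝ (Fin 3)) (X Y : Euc n) :
    Euc n →ₗ[ℝ] ℝ where
  toFun Z := ((τ.curryLeft X).curryLeft Y).curryLeft Z ![]
  map_add' a b := by
    show ((τ.curryLeft X).curryLeft Y).curryLeft (a + b) ![] = _
    rw [map_add]; rfl
  map_smul' c a := by
    show ((τ.curryLeft X).curryLeft Y).curryLeft (c • a) ![] = _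
    rw [map_smul]; rfl

lemma lastArg_apply {n : ℕ} (τ : AlternatingMap ℝ (Euc n) ℝ (Fin 3)) (X Y Z : Euc n) :
    lastArg τ X Y Z = τ ![X, Y, Z] := rfl

lemma euc_decomp {n : ℕ} (Z : Euc n) :
    Z = ∑ i : Fin n, Z i • EuclideanSpace.single i (1 : ℝ) := by
  ext j
  simp [EuclideanSpace.single_apply, Pi.single_apply]

lemma inner_contr3 {n : ℕ} (τ : AlternatingMap ℝ (Euc n) ℝ (Fin 3)) (X Y Z : Euc n) :
    ⟪contr3 τ X Y, Z⟫ = τ ![X, Y, Z] := by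
  have hL : contr3 τ X Y = ∑ i : Fin n,
      (lastArg τ X Y (EuclideanSpace.single i 1)) • EuclideanSpace.single i (1 : ℝ) := rfl
  rw [hL, ← lastArg_apply, sum_inner]
  conv_rhs => rw [euc_decomp Z, map_sum]
  congr 1
  funext i
  rw [real_inner_smul_left, EuclideanSpace.inner_single_left, map_smul]
  simp [mul_comm]

noncomputable def firstArg {n : ℕ} (τ : AlternatingMap ℝ (Euc n) ℝ (Fin 3)) (Y Z : Euc n) :
    Euc n →ₗ[ℝ] ℝ where
  toFun X := τ.curryLeft X ![Y, Z]
  map_add' a b := by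
    show τ.curryLeft (a + b) ![Y, Z] = _
    rw [map_add]; rfl
  map_smul' c a := by
    show τ.curryLeft (c • a) ![Y, Z] = _
    rw [map_smul]; rfl

lemma firstArg_apply {n : ℕ} (τ : AlternatingMap ℝ (Euc n) ℝ (Fin 3)) (X Y Z : Euc n) :
    firstArg τ Y Z X = τ ![X, Y, Z] := rfl

lemma contr3_skew {n : ℕ} (τ : AlternatingMap ℝ (Euc n) ℝ (Fin 3)) (X Y Z : Euc n) :
    ⟪contr3 τ X Y, Z⟫ = -⟪contr3 τ X Z, Y⟫ := by
  rw [inner_contr3, inner_contr3]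
  have h : ![X, Y, Z] = ![X, Z, Y] ∘ (Equiv.swap (1 : Fin 3) 2) := by
    funext i; fin_cases i <;> simp [Equiv.swap_apply_of_ne_of_ne]
  rw [h, AlternatingMap.map_swap _ _ (by decide)]

lemma contr3_add_left {n : ℕ} (τ : AlternatingMap ℝ (Euc n) ℝ (Fin 3)) (X X' Y : Euc n) :
    contr3 τ (X + X') Y = contr3 τ X Y + contr3 τ X' Y := by
  apply ext_inner_right ℝ
  intro Z
  rw [inner_add_left, inner_contr3, inner_contr3, inner_contr3,
    ← firstArg_apply, ← firstArg_apply, ← firstArg_apply, map_add]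

lemma contr3_sub_left {n : ℕ} (τ : AlternatingMap ℝ (Euc n) ℝ (Fin 3)) (X X' Y : Euc n) :
    contr3 τ (X - X') Y = contr3 τ X Y - contr3 τ X' Y := by
  apply ext_inner_right ℝ
  intro Z
  rw [inner_sub_left, inner_contr3, inner_contr3, inner_contr3,
    ← firstArg_apply, ← firstArg_apply, ← firstArg_apply, map_sub]

section main
variable {n : ℕ} (σ : AlternatingMap ℝ (Euc n) ℝ (Fin 3)) (F : Euc n → Euc n)
  (hsq : ∀ X : Euc n, contr3 σ X ∘ₗ contr3 σ X =
      (-(‖X‖ ^ 2)) • LinearMap.id + tens X X + tens (F X) (F X))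

include hsq in
lemma norm_contr3_sq (X v : Euc n) :
    ‖contr3 σ X v‖ ^ 2 = ‖X‖ ^ 2 * ‖v‖ ^ 2 - ⟪v, X⟫ ^ 2 - ⟪v, F X⟫ ^ 2 := by
  have h := congrArg (fun L : Euc n →ₗ[ℝ] Euc n => ⟪L v, v⟫) (hsq X)
  simp only [LinearMap.comp_apply, LinearMap.add_apply, LinearMap.smul_apply,
    LinearMap.id_apply] at h
  have hl : ⟪contr3 σ X (contr3 σ X v), v⟫ = -(‖contr3 σ X v‖ ^ 2) := by
    rw [contr3_skew, real_inner_self_eq_norm_sq]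
  have ht : ∀ U V : Euc n, (tens U V : Euc n →ₗ[ℝ] Euc n) v = ⟪v, V⟫ • U := fun _ _ => rfl
  rw [hl, inner_add_left, inner_add_left, ht, ht, real_inner_smul_left, real_inner_smul_left,
    real_inner_smul_left, real_inner_self_eq_norm_sq] at h
  have hc1 : ⟪X, v⟫ = ⟪v, X⟫ := real_inner_comm _ _
  have hc2 : ⟪F X, v⟫ = ⟪v, F X⟫ := real_inner_comm _ _
  rw [hc1, hc2] at h
  linear_combination -h

include hsq in
theorem main_span (X Y : Euc n) :
    F (X + Y) ∈ Submodule.span ℝ {F X, F Y} := by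
  set K := Submodule.span ℝ {F X, F Y} with hK
  rw [← Submodule.orthogonal_orthogonal K]
  rw [Submodule.mem_orthogonal]
  intro v hv
  have hvX : ⟪v, F X⟫ = 0 := by
    have := (Submodule.mem_orthogonal K v).mp hv (F X)
      (Submodule.subset_span (by simp))
    rwa [real_inner_comm] at this
  have hvY : ⟪v, F Y⟫ = 0 := by
    have := (Submodule.mem_orthogonal K v).mp hv (F Y)
      (Submodule.subset_span (by simp))
    rwa [real_inner_comm] at this
  -- parallelogram
  have e1 := norm_contr3_sq σ F hsq (X + Y) v
  have e2 := norm_contr3_sq σ F hsq (X - Y) v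
  have e3 := norm_contr3_sq σ F hsq X v
  have e4 := norm_contr3_sq σ F hsq Y v
  rw [contr3_add_left] at e1
  rw [contr3_sub_left] at e2
  have p1 : ‖(contr3 σ X) v + (contr3 σ Y) v‖ ^ 2 + ‖(contr3 σ X) v - (contr3 σ Y) v‖ ^ 2
      = 2 * ‖(contr3 σ X) v‖ ^ 2 + 2 * ‖(contr3 σ Y) v‖ ^ 2 := by
    rw [norm_add_sq_real, norm_sub_sq_real]; ring
  have p2 : ‖X + Y‖ ^ 2 + ‖X - Y‖ ^ 2 = 2 * ‖X‖ ^ 2 + 2 * ‖Y‖ ^ 2 := by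
    rw [norm_add_sq_real, norm_sub_sq_real]; ring
  have p3 : ⟪v, X + Y⟫ = ⟪v, X⟫ + ⟪v, Y⟫ := inner_add_right _ _ _
  have p4 : ⟪v, X - Y⟫ = ⟪v, X⟫ - ⟪v, Y⟫ := inner_sub_right _ _ _
  have key : ⟪v, F (X + Y)⟫ ^ 2 + ⟪v, F (X - Y)⟫ ^ 2 = 0 := by
    linear_combination e1 + e2 - 2 * e3 - 2 * e4 - p1 + ‖v‖ ^ 2 * p2
      - (⟪v, X + Y⟫ + ⟪v, X⟫ + ⟪v, Y⟫) * p3 - (⟪v, X - Y⟫ + ⟪v, X⟫ - ⟪v, Y⟫) * p4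
      + 2 * ⟪v, F X⟫ * hvX + 2 * ⟪v, F Y⟫ * hvY
  have h2 : ⟪v, F (X + Y)⟫ ^ 2 = 0 := by
    have := sq_nonneg (⟪v, F (X + Y)⟫ : ℝ)
    have := sq_nonneg (⟪v, F (X - Y)⟫ : ℝ)
    linarith
  exact pow_eq_zero_iff two_ne_zero |>.mp h2

end main

/-- Let `n ≥ 6`, let `σ` be a 3-form on `ℝⁿ`, and let `F : ℝⁿ → ℝⁿ` be a
continuous map such that `F(tX) = tF(X)`, `⟪F(X), X⟫ = 0`, `‖F(X)‖ = ‖X‖`, and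
`σ_X² = −‖X‖² id + X⊗X + F(X)⊗F(X)` for all `X`. Then `F(X+Y)` lies in the linear span of
`F(X)` and `F(Y)` for all `X, Y ∈ ℝⁿ`. -/
theorem statement11 {n : ℕ} (hn : 6 ≤ n) (σ : AlternatingMap ℝ (Euc n) ℝ (Fin 3))
    (F : Euc n → Euc n) (hFcont : Continuous F)
    (hFhom : ∀ (t : ℝ) (X : Euc n), F (t • X) = t • F X)
    (hFperp : ∀ X : Euc n, ⟪F X, X⟫ = 0)
    (hFnorm : ∀ X : Euc n, ‖F X‖ = ‖X‖)
    (hsq : ∀ X : Euc n, contr3 σ X ∘ₗ contr3 σ X =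
      (-(‖X‖ ^ 2)) • LinearMap.id + tens X X + tens (F X) (F X)) :
    ∀ X Y : Euc n, F (X + Y) ∈ Submodule.span ℝ {F X, F Y} := by
  intro X Y
  exact main_span σ F hsq X Y
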